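/- Assume F : H → H is strongly monotone with modulus m > 0 and Lipschitz-continuous with constant L > 0, let z be the (unique) solution of the variational inequality on C, and let (x_n), (y_n) be generated by x_0 = y_0 ∈ C, x_{n+1} = P_C(x_n − λ F(y_n)), y_{n+1} = 2x_{n+1} − x_n with λ ∈ (0, (√2 − 1)/L). Then for every m₁ ∈ (0, m] and every n ≥ 1: ‖x_{n+1} − z‖² + (1 − √2 λL) ‖x_{n+1} − y_n‖² + 4λ ⟨F(z), x_n − z⟩ ≤ (1 − 4λ m₁) ‖x_n − z‖² + 2λ m₁ ‖x_{n−1} − z‖² + max{λL/(1 − √2 λL), 1/2} · ( (1 − √2 λL) ‖x_n − y_{n−1}‖² + 4λ ⟨F(z), x_{n−1} − z⟩ ). -/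

import Mathlib

open RealInnerProductSpace

set_option maxHeartbeats 1000000 in
private lemma key_estimate
    {H : Type*} [NormedAddCommGroup H] [InnerProductSpace ℝ H]
    (F : H → H) (m₁ L lam : ℝ)
    (hm₁0 : 0 < m₁) (hL : 0 < L) (hlam0 : 0 < lam)
    (hlamL : lam * L < Real.sqrt 2 - 1)
    (a b c w w0 z : H)
    (hw : w = (2:ℝ) • b - c)
    (P1 : 0 ≤ ⟪a - b + lam • F w, z - a⟫)
    (P2 : 0 ≤ ⟪b - c + lam • F w0, a - b⟫)
    (P3 : 0 ≤ ⟪b - c + lam • F w0, c - b⟫)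
    (hstr : m₁ * ‖w - z‖ ^ 2 ≤ ⟪F w - F z, w - z⟫)
    (hlipi : ‖F w - F w0‖ ≤ L * ‖w - w0‖)
    (hg1 : 0 ≤ ⟪F z, b - z⟫) (hg0 : 0 ≤ ⟪F z, c - z⟫) :
    ‖a - z‖ ^ 2 + (1 - Real.sqrt 2 * lam * L) * ‖a - w‖ ^ 2 + 4 * lam * ⟪F z, b - z⟫ ≤
      (1 - 4 * lam * m₁) * ‖b - z‖ ^ 2 + 2 * lam * m₁ * ‖c - z‖ ^ 2
        + max (lam * L / (1 - Real.sqrt 2 * lam * L)) (1 / 2) *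
          ((1 - Real.sqrt 2 * lam * L) * ‖b - w0‖ ^ 2 + 4 * lam * ⟪F z, c - z⟫) := by
  have hs2 : (Real.sqrt 2) ^ 2 = 2 := Real.sq_sqrt (by norm_num)
  have hs2gt : 1 < Real.sqrt 2 := by nlinarith [Real.sqrt_nonneg 2]
  have hpos : 0 < 1 - Real.sqrt 2 * lam * L := by nlinarith [Real.sqrt_nonneg 2]
  -- expand P1
  have P1' : lam * ⟪F w, a - z⟫ ≤ -⟪a - b, a - z⟫ := by
    rw [inner_add_left, real_inner_smul_left,
      show z - a = -(a - z) from by abel] at P1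
    simp only [inner_neg_right] at P1
    linarith
  -- key identity I1
  have I1 : 2 * ⟪a - b, a - z⟫ = ‖a - z‖ ^ 2 + ‖a - b‖ ^ 2 - ‖b - z‖ ^ 2 := by
    have e2 := norm_add_sq_real (b - a) (a - z)
    rw [show b - a + (a - z) = b - z from by abel] at e2
    have e3 : ⟪b - a, a - z⟫ = -⟪a - b, a - z⟫ := by
      rw [show b - a = -(a - b) from by abel, inner_neg_left]
    have e4 : ‖b - a‖ = ‖a - b‖ := norm_sub_rev _ _
    rw [e3, e4] at e2
    linarith
  have h1 : ‖a - z‖ ^ 2 ≤ ‖b - z‖ ^ 2 - ‖a - b‖ ^ 2 - 2 * lam * ⟪F w, a - z⟫ := by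
    linarith
  -- decomposition
  have hdecomp : ⟪F w, a - z⟫ = ⟪F w - F w0, a - w⟫ + ⟪F w0, a - w⟫
      + ⟪F w - F z, w - z⟫ + ⟪F z, w - z⟫ := by
    rw [show a - z = (a - w) + (w - z) from by abel, inner_add_right,
      inner_sub_left, inner_sub_left]
    ring
  -- T1 bound
  have htri : ‖w - w0‖ ≤ ‖b - c‖ + ‖b - w0‖ := by
    rw [show w - w0 = (b - c) + (b - w0) from by rw [hw, two_smul]; abel]
    exact norm_add_le _ _
  have hT1b : -(L * (‖b - c‖ + ‖b - w0‖) * ‖a - w‖) ≤ ⟪F w - F w0, a - w⟫ := by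
    have h2 := abs_real_inner_le_norm (F w - F w0) (a - w)
    have h3 := neg_abs_le ⟪F w - F w0, a - w⟫
    have h4 : ‖F w - F w0‖ * ‖a - w‖ ≤ L * (‖b - c‖ + ‖b - w0‖) * ‖a - w‖ :=
      mul_le_mul_of_nonneg_right
        (hlipi.trans (mul_le_mul_of_nonneg_left htri hL.le)) (norm_nonneg _)
    linarith
  -- T2 bound
  have hT2b : -⟪b - c, a - b⟫ + ‖b - c‖ ^ 2 ≤ lam * ⟪F w0, a - w⟫ := by
    have eT2 : lam * ⟪F w0, a - w⟫ = lam * ⟪F w0, a - b⟫ + lam * ⟪F w0, c - b⟫ := by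
      rw [show a - w = (a - b) + (c - b) from by rw [hw, two_smul]; abel, inner_add_right]
      ring
    rw [inner_add_left, real_inner_smul_left] at P2 P3
    rw [show c - b = -(b - c) from by abel] at P3
    simp only [inner_neg_right] at P3
    rw [real_inner_self_eq_norm_sq] at P3
    rw [show c - b = -(b - c) from by abel] at eT2
    simp only [inner_neg_right] at eT2
    linarith
  -- T4 identity
  have hT4b : ⟪F z, w - z⟫ = 2 * ⟪F z, b - z⟫ - ⟪F z, c - z⟫ := by
    rw [show w - z = (2:ℝ) • (b - z) - (c - z) from by rw [hw]; module,
      inner_sub_right, real_inner_smul_right]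
  -- s² identity
  have hs2id : ‖a - w‖ ^ 2 = ‖a - b‖ ^ 2 - 2 * ⟪a - b, b - c⟫ + ‖b - c‖ ^ 2 := by
    rw [show a - w = (a - b) - (b - c) from by rw [hw, two_smul]; abel,
      norm_sub_sq_real]
  -- Y identity
  have hYid : ‖w - z‖ ^ 2 = 2 * ‖b - z‖ ^ 2 - ‖c - z‖ ^ 2 + 2 * ‖b - c‖ ^ 2 := by
    have e2 : ‖w - z‖ ^ 2 = ‖(2:ℝ) • (b - z)‖ ^ 2 - 2 * ⟪(2:ℝ) • (b - z), c - z⟫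
        + ‖c - z‖ ^ 2 := by
      rw [show w - z = (2:ℝ) • (b - z) - (c - z) from by rw [hw]; module,
        norm_sub_sq_real]
    have e3 : ‖(2:ℝ) • (b - z)‖ ^ 2 = 4 * ‖b - z‖ ^ 2 := by
      rw [norm_smul]; simp; ring
    have e5 : ‖b - c‖ ^ 2 = ‖b - z‖ ^ 2 - 2 * ⟪b - z, c - z⟫ + ‖c - z‖ ^ 2 := by
      rw [show b - c = (b - z) - (c - z) from by abel, norm_sub_sq_real]
    rw [e2, e3, real_inner_smul_left]
    linarith
  have hcomm : ⟪a - b, b - c⟫ = ⟪b - c, a - b⟫ := real_inner_comm _ _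
  -- main inequality
  have m1 : 2 * lam * (-(L * (‖b - c‖ + ‖b - w0‖) * ‖a - w‖))
      ≤ 2 * lam * ⟪F w - F w0, a - w⟫ :=
    mul_le_mul_of_nonneg_left hT1b (by positivity)
  have m3 : 2 * lam * (m₁ * ‖w - z‖ ^ 2) ≤ 2 * lam * ⟪F w - F z, w - z⟫ :=
    mul_le_mul_of_nonneg_left hstr (by positivity)
  have m4 : lam * ⟪F z, w - z⟫ = lam * (2 * ⟪F z, b - z⟫ - ⟪F z, c - z⟫) := by
    rw [hT4b]
  rw [hdecomp] at h1
  have Hmain : ‖a - z‖ ^ 2 ≤ ‖b - z‖ ^ 2 - ‖a - w‖ ^ 2 - ‖b - c‖ ^ 2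
      + 2 * lam * L * ‖b - c‖ * ‖a - w‖ + 2 * lam * L * ‖b - w0‖ * ‖a - w‖
      - 2 * lam * m₁ * ‖w - z‖ ^ 2 - 4 * lam * ⟪F z, b - z⟫
      + 2 * lam * ⟪F z, c - z⟫ := by
    linarith only [h1, m1, m3, m4, hT2b, hs2id, hcomm]
  -- AM-GM bounds
  have hps : 2 * lam * L * ‖b - c‖ * ‖a - w‖
      ≤ (Real.sqrt 2 - 1) * (lam * L) * ‖a - w‖ ^ 2 + ‖b - c‖ ^ 2 := by
    nlinarith [sq_nonneg (lam * L * ‖a - w‖ - ‖b - c‖),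
      mul_nonneg (mul_nonneg (sub_nonneg.mpr hlamL.le)
        (mul_nonneg hlam0.le hL.le)) (sq_nonneg ‖a - w‖)]
  have hqs : 2 * lam * L * ‖b - w0‖ * ‖a - w‖
      ≤ lam * L * ‖a - w‖ ^ 2 + lam * L * ‖b - w0‖ ^ 2 := by
    nlinarith [mul_nonneg (mul_nonneg hlam0.le hL.le) (sq_nonneg (‖a - w‖ - ‖b - w0‖))]
  set M := max (lam * L / (1 - Real.sqrt 2 * lam * L)) (1/2 : ℝ) with hM
  have hM1 : (1/2 : ℝ) ≤ M := le_max_right _ _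
  have hM2 : lam * L ≤ M * (1 - Real.sqrt 2 * lam * L) := by
    have h := le_max_left (lam * L / (1 - Real.sqrt 2 * lam * L)) (1/2 : ℝ)
    calc lam * L = lam * L / (1 - Real.sqrt 2 * lam * L) * (1 - Real.sqrt 2 * lam * L) := by
          rw [div_mul_cancel₀ _ hpos.ne']
      _ ≤ M * (1 - Real.sqrt 2 * lam * L) := mul_le_mul_of_nonneg_right h hpos.le
  have f1 : lam * L * ‖b - w0‖ ^ 2 ≤ M * ((1 - Real.sqrt 2 * lam * L) * ‖b - w0‖ ^ 2) := by
    calc lam * L * ‖b - w0‖ ^ 2 ≤ M * (1 - Real.sqrt 2 * lam * L) * ‖b - w0‖ ^ 2 :=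
          mul_le_mul_of_nonneg_right hM2 (sq_nonneg _)
      _ = M * ((1 - Real.sqrt 2 * lam * L) * ‖b - w0‖ ^ 2) := by ring
  have f2 : 2 * lam * ⟪F z, c - z⟫ ≤ M * (4 * lam * ⟪F z, c - z⟫) := by
    have h0 : 0 ≤ (M - 1/2) * (4 * lam * ⟪F z, c - z⟫) :=
      mul_nonneg (by linarith) (by positivity)
    nlinarith
  have hYid' : 2 * lam * m₁ * ‖w - z‖ ^ 2 = 4 * lam * m₁ * ‖b - z‖ ^ 2
      - 2 * lam * m₁ * ‖c - z‖ ^ 2 + 4 * lam * m₁ * ‖b - c‖ ^ 2 := by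
    linear_combination (2 * lam * m₁) * hYid
  have f3 : 0 ≤ 4 * lam * m₁ * ‖b - c‖ ^ 2 := by positivity
  linarith only [Hmain, hps, hqs, hYid', f3, f1, f2]

set_option maxHeartbeats 1000000 in
theorem strong_monotone_key_inequality
    {H : Type*} [NormedAddCommGroup H] [InnerProductSpace ℝ H] [CompleteSpace H]
    (C : Set H) (hC : C.Nonempty) (hCclosed : IsClosed C) (hCconv : Convex ℝ C)
    (P : H → H)
    (hPmem : ∀ u : H, P u ∈ C)
    (hPchar : ∀ u : H, ∀ y ∈ C, 0 ≤ ⟪P u - u, y - P u⟫)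
    (F : H → H)
    (m : ℝ) (hm : 0 < m)
    (hstrong : ∀ x y : H, m * ‖x - y‖ ^ 2 ≤ ⟪F x - F y, x - y⟫)
    (L : ℝ) (hL : 0 < L)
    (hlip : ∀ x y : H, ‖F x - F y‖ ≤ L * ‖x - y‖)
    (z : H) (hzC : z ∈ C) (hzS : ∀ w ∈ C, 0 ≤ ⟪F z, w - z⟫)
    (lam : ℝ) (hlam : lam ∈ Set.Ioo (0 : ℝ) ((Real.sqrt 2 - 1) / L))
    (x y : ℕ → H)
    (hx0 : x 0 ∈ C) (hy0 : y 0 = x 0)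
    (hxrec : ∀ n : ℕ, x (n + 1) = P (x n - lam • F (y n)))
    (hyrec : ∀ n : ℕ, y (n + 1) = (2 : ℝ) • x (n + 1) - x n)
    (m₁ : ℝ) (hm₁ : m₁ ∈ Set.Ioc (0 : ℝ) m)
    (n : ℕ) (hn : 1 ≤ n) :
    ‖x (n + 1) - z‖ ^ 2 + (1 - Real.sqrt 2 * lam * L) * ‖x (n + 1) - y n‖ ^ 2
        + 4 * lam * ⟪F z, x n - z⟫ ≤
      (1 - 4 * lam * m₁) * ‖x n - z‖ ^ 2 + 2 * lam * m₁ * ‖x (n - 1) - z‖ ^ 2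
        + max (lam * L / (1 - Real.sqrt 2 * lam * L)) (1 / 2) *
          ((1 - Real.sqrt 2 * lam * L) * ‖x n - y (n - 1)‖ ^ 2
            + 4 * lam * ⟪F z, x (n - 1) - z⟫) := by
  obtain ⟨hlam0, hlamlt⟩ := hlam
  obtain ⟨hm₁0, hm₁m⟩ := hm₁
  obtain ⟨k, rfl⟩ : ∃ k, n = k + 1 := ⟨n - 1, (Nat.succ_pred_eq_of_pos hn).symm⟩
  simp only [Nat.add_sub_cancel]
  have hxC : ∀ j : ℕ, x j ∈ C := by
    intro j
    cases j with
    | zero => exact hx0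
    | succ i => rw [hxrec i]; exact hPmem _
  have hlamL : lam * L < Real.sqrt 2 - 1 := (lt_div_iff₀ hL).mp hlamlt
  have P1 : 0 ≤ ⟪x (k+1+1) - x (k+1) + lam • F (y (k+1)), z - x (k+1+1)⟫ := by
    have h := hPchar (x (k+1) - lam • F (y (k+1))) z hzC
    rw [← hxrec (k+1)] at h
    rwa [show x (k+1+1) - (x (k+1) - lam • F (y (k+1)))
      = x (k+1+1) - x (k+1) + lam • F (y (k+1)) from by abel] at h
  have P2 : 0 ≤ ⟪x (k+1) - x k + lam • F (y k), x (k+1+1) - x (k+1)⟫ := by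
    have h := hPchar (x k - lam • F (y k)) (x (k+1+1)) (hxC (k+1+1))
    rw [← hxrec k] at h
    rwa [show x (k+1) - (x k - lam • F (y k))
      = x (k+1) - x k + lam • F (y k) from by abel] at h
  have P3 : 0 ≤ ⟪x (k+1) - x k + lam • F (y k), x k - x (k+1)⟫ := by
    have h := hPchar (x k - lam • F (y k)) (x k) (hxC k)
    rw [← hxrec k] at h
    rwa [show x (k+1) - (x k - lam • F (y k))
      = x (k+1) - x k + lam • F (y k) from by abel] at h
  have hstr : m₁ * ‖y (k+1) - z‖ ^ 2 ≤ ⟪F (y (k+1)) - F z, y (k+1) - z⟫ := by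
    have h := hstrong (y (k+1)) z
    have h2 : m₁ * ‖y (k+1) - z‖ ^ 2 ≤ m * ‖y (k+1) - z‖ ^ 2 :=
      mul_le_mul_of_nonneg_right hm₁m (by positivity)
    linarith
  exact key_estimate F m₁ L lam hm₁0 hL hlam0 hlamL
    (x (k+1+1)) (x (k+1)) (x k) (y (k+1)) (y k) z
    (hyrec k) P1 P2 P3 hstr (hlip _ _) (hzS _ (hxC (k+1))) (hzS _ (hxC k))
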